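/- For every k ≥ 1, the polynomial F_k defined by the Kronecker recurrence satisfies: every monomial y_0^a * y_1^b appearing with nonzero coefficient in F_k, other than the constant term 1, has a > b. -/

import Mathlib

open MvPolynomial

private def wt (m : Fin 2 →₀ ℕ) : ℤ := (m 0 : ℤ) - (m 1 : ℤ)

private lemma wt_add (a b : Fin 2 →₀ ℕ) : wt (a + b) = wt a + wt b := by
  simp only [wt, Finsupp.add_apply]
  push_cast
  ring

private def Good (p : MvPolynomial (Fin 2) ℤ) : Prop :=
  constantCoeff p = 1 ∧ ∀ m ∈ p.support, m ≠ 0 → 1 ≤ wt m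

private lemma wt_nonneg_of_good {p : MvPolynomial (Fin 2) ℤ} (hp : Good p)
    {m : Fin 2 →₀ ℕ} (hm : m ∈ p.support) : 0 ≤ wt m := by
  by_cases h : m = 0
  · simp [h, wt]
  · linarith [hp.2 m hm h]

private lemma good_mul {p q : MvPolynomial (Fin 2) ℤ} (hp : Good p) (hq : Good q) :
    Good (p * q) := by
  constructor
  · rw [map_mul, hp.1, hq.1, mul_one]
  · intro m hm hm0
    have := MvPolynomial.support_mul p q hm
    rw [Finset.mem_add] at this
    obtain ⟨a, ha, b, hb, rfl⟩ := this
    rw [wt_add]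
    by_cases h : a = 0
    · subst h
      have hb0 : b ≠ 0 := by simpa using hm0
      have := hq.2 b hb hb0
      have := wt_nonneg_of_good hp ha
      linarith
    · have := hp.2 a ha h
      have := wt_nonneg_of_good hq hb
      linarith

private lemma good_div {p q : MvPolynomial (Fin 2) ℤ} (hq : Good q)
    (hpq : Good (p * q)) : Good p := by
  have hc : constantCoeff p = 1 := by
    have h := hpq.1
    rw [map_mul, hq.1, mul_one] at h
    exact h
  -- Step A: all monomials of p have nonnegative weight
  have stepA : ∀ m ∈ p.support, 0 ≤ wt m := by
    by_contra h
    push_neg at h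
    obtain ⟨mbad, hbad, hbadwt⟩ := h
    obtain ⟨m₀, hm₀, hmin⟩ := Finset.exists_min_image p.support wt ⟨mbad, hbad⟩
    have hcoeff : coeff m₀ (p * q) = coeff m₀ p := by
      rw [MvPolynomial.coeff_mul]
      rw [Finset.sum_eq_single (m₀, (0 : Fin 2 →₀ ℕ))]
      · simp [hq.1] at *
        have : coeff 0 q = 1 := hq.1
        simp [this]
      · rintro ⟨x1, x2⟩ hx hne
        rw [Finset.HasAntidiagonal.mem_antidiagonal] at hx
        by_cases hx2 : x2 = 0
        · exfalso; apply hne; subst hx2; simp at hx; simp [hx]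
        · by_cases hc1 : coeff x1 p = 0
          · simp [hc1]
          · by_cases hc2 : coeff x2 q = 0
            · simp [hc2]
            · exfalso
              have h1 : x1 ∈ p.support := MvPolynomial.mem_support_iff.2 hc1
              have h2 : x2 ∈ q.support := MvPolynomial.mem_support_iff.2 hc2
              have hw2 := hq.2 x2 h2 hx2
              have hmin1 := hmin x1 h1
              have : wt m₀ = wt x1 + wt x2 := by rw [← hx, wt_add]
              linarith
      · intro h
        exfalso
        exact h (by rw [Finset.HasAntidiagonal.mem_antidiagonal]; simp)
    have hmem : m₀ ∈ (p * q).support := by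
      rw [MvPolynomial.mem_support_iff, hcoeff]
      exact MvPolynomial.mem_support_iff.1 hm₀
    have hneg : wt m₀ < 0 := lt_of_le_of_lt (hmin mbad hbad) hbadwt
    by_cases h0 : m₀ = 0
    · subst h0; simp [wt] at hneg
    · linarith [hpq.2 m₀ hmem h0]
  refine ⟨hc, ?_⟩
  intro m hm hm0
  by_contra hlt
  push_neg at hlt
  have hwt0 : wt m = 0 := le_antisymm (by linarith) (stepA m hm)
  have hcoeff : coeff m (p * q) = coeff m p := by
    rw [MvPolynomial.coeff_mul]
    rw [Finset.sum_eq_single (m, (0 : Fin 2 →₀ ℕ))]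
    · have : coeff 0 q = 1 := hq.1
      simp [this]
    · rintro ⟨x1, x2⟩ hx hne
      rw [Finset.HasAntidiagonal.mem_antidiagonal] at hx
      by_cases hx2 : x2 = 0
      · exfalso; apply hne; subst hx2; simp at hx; simp [hx]
      · by_cases hc1 : coeff x1 p = 0
        · simp [hc1]
        · by_cases hc2 : coeff x2 q = 0
          · simp [hc2]
          · exfalso
            have h1 : x1 ∈ p.support := MvPolynomial.mem_support_iff.2 hc1
            have h2 : x2 ∈ q.support := MvPolynomial.mem_support_iff.2 hc2
            have hw2 := hq.2 x2 h2 hx2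
            have hw1 := stepA x1 h1
            have : wt m = wt x1 + wt x2 := by rw [← hx, wt_add]
            linarith
    · intro h
      exfalso
      exact h (by rw [Finset.HasAntidiagonal.mem_antidiagonal]; simp)
  have hmem : m ∈ (p * q).support := by
    rw [MvPolynomial.mem_support_iff, hcoeff]
    exact MvPolynomial.mem_support_iff.1 hm
  have := hpq.2 m hmem hm0
  linarith

private lemma good_one : Good (1 : MvPolynomial (Fin 2) ℤ) := by
  constructor
  · simp
  · intro m hm hm0
    rw [MvPolynomial.mem_support_iff, MvPolynomial.coeff_one] at hm
    simp [hm0.symm] at hm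

private lemma good_F (F : ℕ → MvPolynomial (Fin 2) ℤ)
    (h0 : F 0 = 1)
    (h1 : F 1 = X 0 + 1)
    (hrec : ∀ k, 2 ≤ k → F k * F (k - 2) = X 0 ^ k * X 1 ^ (k - 1) + F (k - 1) ^ 2) :
    ∀ k, Good (F k) := by
  intro k
  induction k using Nat.strong_induction_on with
  | _ k ih =>
    match k with
    | 0 => rw [h0]; exact good_one
    | 1 =>
      rw [h1]
      constructor
      · simp
      · intro m hm hm0
        rw [MvPolynomial.mem_support_iff, MvPolynomial.coeff_add,
          MvPolynomial.coeff_X', MvPolynomial.coeff_one] at hm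
        by_cases h : Finsupp.single (0 : Fin 2) 1 = m
        · subst h
          simp [wt, Finsupp.single_apply]
        · simp [h, hm0.symm] at hm
    | (n+2) =>
      have hq := ih n (by omega)
      have hr := ih (n+1) (by omega)
      have hrw := hrec (n+2) (by omega)
      have hrhs : Good (X 0 ^ (n+2) * X 1 ^ (n+1) + F (n+1) ^ 2) := by
        have hsq : Good (F (n+1) ^ 2) := by
          rw [sq]; exact good_mul hr hr
        have hT : (X 0 ^ (n+2) * X 1 ^ (n+1) : MvPolynomial (Fin 2) ℤ)
            = monomial (Finsupp.single 0 (n+2) + Finsupp.single 1 (n+1)) 1 := by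
          rw [MvPolynomial.X_pow_eq_monomial, MvPolynomial.X_pow_eq_monomial,
            MvPolynomial.monomial_mul, mul_one]
        have hu0 : (Finsupp.single (0 : Fin 2) (n+2) + Finsupp.single 1 (n+1)) ≠ 0 := by
          intro h
          have := DFunLike.congr_fun h 0
          simp [Finsupp.single_apply] at this
        constructor
        · rw [map_add, hsq.1, hT]
          simp [MvPolynomial.constantCoeff_monomial, hu0]
        · intro m hm hm0
          have := MvPolynomial.support_add hm
          rw [Finset.mem_union] at this
          rcases this with h | h
          · rw [hT, MvPolynomial.support_monomial, if_neg one_ne_zero] at h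
            rw [Finset.mem_singleton] at h
            subst h
            simp [wt, Finsupp.add_apply, Finsupp.single_apply]
          · exact hsq.2 m h hm0
      have : Good (F (n+2) * F n) := by
        have h2 : n + 2 - 2 = n := by omega
        have h1' : n + 2 - 1 = n + 1 := by omega
        rw [h2, h1'] at hrw
        rw [hrw]
        exact hrhs
      exact good_div hq this

/-- Every non-constant monomial `y₀^a y₁^b` appearing in the Kronecker F-polynomial `F_k`
(`k ≥ 1`) satisfies `a > b`. -/
theorem kronecker_F_monomials_white_exceeds_black
    (F : ℕ → MvPolynomial (Fin 2) ℤ)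
    (h0 : F 0 = 1)
    (h1 : F 1 = X 0 + 1)
    (hrec : ∀ k, 2 ≤ k → F k * F (k - 2) = X 0 ^ k * X 1 ^ (k - 1) + F (k - 1) ^ 2) :
    ∀ k, 1 ≤ k → ∀ a b : ℕ,
      (F k).coeff (Finsupp.single 0 a + Finsupp.single 1 b) ≠ 0 →
      ¬(a = 0 ∧ b = 0) → a > b := by
  intro k _ a b hcoeff hab
  have hgood := good_F F h0 h1 hrec k
  set m : Fin 2 →₀ ℕ := Finsupp.single 0 a + Finsupp.single 1 b with hm
  have hm0 : m 0 = a := by simp [hm, Finsupp.add_apply, Finsupp.single_apply]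
  have hm1 : m 1 = b := by simp [hm, Finsupp.add_apply, Finsupp.single_apply]
  have hmne : m ≠ 0 := by
    intro h
    apply hab
    constructor
    · rw [← hm0, h]; rfl
    · rw [← hm1, h]; rfl
  have hmem : m ∈ (F k).support := MvPolynomial.mem_support_iff.2 hcoeff
  have := hgood.2 m hmem hmne
  rw [wt, hm0, hm1] at this
  omega
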